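/- Fix ℏ > 0 and ω > 0, and define ψ : ℝ \ {0} → ℝ by ψ(x) = |2x|^{-1/4} e^{−ω|x|/ℏ}. Then ψ satisfies, at every x ≠ 0, the eigenvalue equation of the canonically transformed harmonic-oscillator Hamiltonian: −(ℏ²/2) |x| ψ''(x) − (ℏ²/2) (d²/dx²)( |x| ψ )(x) + ω² |x| ψ(x) + (ℏ²/16) |x|^{-1} ψ(x) = (ℏω/2) ψ(x). In other words, ψ is an eigenfunction with eigenvalue ℏω/2 of the operator H' = (1/2)|q̂'| p̂'² + (1/2) p̂'² |q̂'| + ω² |q̂'| + (ℏ²/16) |q̂'|^{-1}, where q̂' is multiplication by x and p̂' = −iℏ d/dx. -/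

import Mathlib

open Real Filter
set_option maxHeartbeats 1000000

/-- `ψ(x) = |2x|^{-1/4} e^{−ω|x|/ℏ}`, the transformed ground state of the harmonic
oscillator (defined for `x ≠ 0`; the value at `0` is irrelevant junk). -/
noncomputable def groundState (ℏ ω : ℝ) : ℝ → ℝ := fun x =>
  |2 * x| ^ (-(1 / 4 : ℝ)) * Real.exp (-(ω * |x|) / ℏ)

lemma hasDerivAt_P (k c b d x : ℝ) (h : c * x ≠ 0) :
    HasDerivAt (fun y => k * (c * y) ^ b * Real.exp (d * y))
      (k * (b * (c * x) ^ (b - 1) * c) * Real.exp (d * x)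
        + k * (c * x) ^ b * (Real.exp (d * x) * d)) x := by
  have h1 : HasDerivAt (fun y : ℝ => (c * y) ^ b) (b * (c * x) ^ (b - 1) * c) x := by
    have := (Real.hasDerivAt_rpow_const (p := b) (Or.inl h)).comp x
      ((hasDerivAt_id x).const_mul c)
    simpa [mul_comm, Function.comp_def] using this
  have h2 : HasDerivAt (fun y : ℝ => Real.exp (d * y)) (Real.exp (d * x) * d) x := by
    have := (Real.hasDerivAt_exp (d * x)).comp x ((hasDerivAt_id x).const_mul d)
    simpa [mul_comm, Function.comp_def] using this
  simpa [Pi.mul_def] using (h1.const_mul k).mul h2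

lemma deriv2_P (k c b d x : ℝ) (h : c * x ≠ 0) :
    deriv (deriv (fun y => k * (c * y) ^ b * Real.exp (d * y))) x =
      k * (b * (b - 1) * (c * x) ^ (b - 2) * c ^ 2 + 2 * b * (c * x) ^ (b - 1) * c * d
        + (c * x) ^ b * d ^ 2) * Real.exp (d * x) := by
  have hev : ∀ᶠ y in nhds x, c * y ≠ 0 :=
    ((continuous_const.mul continuous_id).continuousAt (x := x)).eventually_ne h
  have hd1 : deriv (fun y => k * (c * y) ^ b * Real.exp (d * y)) =ᶠ[nhds x]
      fun y => (k * b * c) * (c * y) ^ (b - 1) * Real.exp (d * y)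
        + (k * d) * (c * y) ^ b * Real.exp (d * y) := by
    filter_upwards [hev] with y hy
    rw [(hasDerivAt_P k c b d y hy).deriv]; ring
  rw [hd1.deriv_eq]
  rw [((hasDerivAt_P (k * b * c) c (b - 1) d x h).fun_add
    (hasDerivAt_P (k * d) c b d x h)).deriv]
  have e1 : b - 1 - 1 = b - 2 := by ring
  rw [e1]; ring

lemma rpow_facts (t : ℝ) (ht : 0 < t) :
    t ^ (-(1/4) - 1 : ℝ) = t ^ (-(1/4) : ℝ) / t ∧
    t ^ (-(1/4) - 2 : ℝ) = t ^ (-(1/4) : ℝ) / t ^ 2 ∧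
    t ^ ((3/4) : ℝ) = t ^ (-(1/4) : ℝ) * t ∧
    t ^ ((3/4) - 1 : ℝ) = t ^ (-(1/4) : ℝ) ∧
    t ^ ((3/4) - 2 : ℝ) = t ^ (-(1/4) : ℝ) / t := by
  have h2 : t ^ (2:ℝ) = t ^ 2 := by
    rw [show ((2:ℝ)) = ((2:ℕ):ℝ) by norm_num, Real.rpow_natCast]
  refine ⟨?_, ?_, ?_, ?_, ?_⟩
  · rw [Real.rpow_sub ht, Real.rpow_one]
  · rw [Real.rpow_sub ht, h2]
  · rw [show ((3/4):ℝ) = -(1/4) + 1 by norm_num, Real.rpow_add ht, Real.rpow_one]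
  · rw [show ((3/4) - 1 :ℝ) = -(1/4) by norm_num]
  · rw [show ((3/4) - 2 :ℝ) = -(1/4) - 1 by norm_num, Real.rpow_sub ht, Real.rpow_one]

/-- For ℏ > 0 and ω > 0, the function `ψ(x) = |2x|^{-1/4} e^{−ω|x|/ℏ}` satisfies at
every `x ≠ 0` the eigenvalue equation of the canonically transformed
harmonic-oscillator Hamiltonian
`H' = (1/2)|q̂'|p̂'² + (1/2)p̂'²|q̂'| + ω²|q̂'| + (ℏ²/16)|q̂'|⁻¹`
(`q̂' = x·`, `p̂' = −iℏ d/dx`), i.e.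
`−(ℏ²/2)|x|ψ''(x) − (ℏ²/2)(|x|ψ)''(x) + ω²|x|ψ(x) + (ℏ²/16)|x|⁻¹ψ(x) = (ℏω/2)ψ(x)`,
so `ψ` is an eigenfunction of `H'` with eigenvalue `ℏω/2`. -/
theorem transformed_ground_state_eigenfunction (ℏ ω : ℝ) (hℏ : 0 < ℏ) (hω : 0 < ω) :
    ∀ x : ℝ, x ≠ 0 →
      -(ℏ ^ 2 / 2) * |x| * deriv (deriv (groundState ℏ ω)) x
        - (ℏ ^ 2 / 2) * deriv (deriv fun y => |y| * groundState ℏ ω y) x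
        + ω ^ 2 * |x| * groundState ℏ ω x
        + (ℏ ^ 2 / 16) * |x|⁻¹ * groundState ℏ ω x
      = (ℏ * ω / 2) * groundState ℏ ω x := by
  intro x hx
  have hℏ' := hℏ.ne'
  rcases hx.lt_or_gt with hneg | hpos
  · -- x < 0, c = -2, d = ω/ℏ
    set c : ℝ := -2 with hc
    set d : ℝ := ω / ℏ with hd
    have hev : ∀ᶠ y in nhds x, y < 0 := eventually_lt_nhds hneg
    have hcx : (0:ℝ) < c * x := by simp [hc]; linarith
    have hcx' := hcx.ne'
    have hψ : groundState ℏ ω =ᶠ[nhds x]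
        fun y => 1 * (c * y) ^ (-(1/4) : ℝ) * Real.exp (d * y) := by
      filter_upwards [hev] with y hy
      have h1 : |2 * y| = c * y := by rw [abs_of_neg (by linarith)]; ring
      have h2 : -(ω * |y|) / ℏ = d * y := by rw [abs_of_neg hy, hd]; ring
      rw [groundState, h1, h2, one_mul]
    have hG : (fun y => |y| * groundState ℏ ω y) =ᶠ[nhds x]
        fun y => (1/2) * (c * y) ^ ((3/4) : ℝ) * Real.exp (d * y) := by
      filter_upwards [hev] with y hy
      have hcy : (0:ℝ) < c * y := by simp [hc]; linarith
      have h1 : |2 * y| = c * y := by rw [abs_of_neg (by linarith)]; ring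
      have h2 : -(ω * |y|) / ℏ = d * y := by rw [abs_of_neg hy, hd]; ring
      have h3 : (c * y) ^ ((3/4) : ℝ) = (c * y) ^ (-(1/4) : ℝ) * (c * y) :=
        (rpow_facts _ hcy).2.2.1
      rw [groundState, h1, h2, h3, abs_of_neg hy, hc]
      ring
    have D1 : deriv (deriv (groundState ℏ ω)) x =
        deriv (deriv (fun y => 1 * (c * y) ^ (-(1/4) : ℝ) * Real.exp (d * y))) x :=
      (hψ.deriv.deriv).self_of_nhds
    have D2 : deriv (deriv fun y => |y| * groundState ℏ ω y) x =
        deriv (deriv (fun y => (1/2) * (c * y) ^ ((3/4) : ℝ) * Real.exp (d * y))) x :=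
      (hG.deriv.deriv).self_of_nhds
    obtain ⟨E1, E2, E3, E4, E5⟩ := rpow_facts (c * x) hcx
    rw [D1, D2, deriv2_P _ _ _ _ _ hcx', deriv2_P _ _ _ _ _ hcx', hψ.self_of_nhds,
      E1, E2, E3, E4, E5, abs_of_neg hneg]
    simp only [hc, hd]
    field_simp
    ring
  · -- x > 0, c = 2, d = -(ω/ℏ)
    set c : ℝ := 2 with hc
    set d : ℝ := -(ω / ℏ) with hd
    have hev : ∀ᶠ y in nhds x, 0 < y := eventually_gt_nhds hpos
    have hcx : (0:ℝ) < c * x := by simp [hc]; linarith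
    have hcx' := hcx.ne'
    have hψ : groundState ℏ ω =ᶠ[nhds x]
        fun y => 1 * (c * y) ^ (-(1/4) : ℝ) * Real.exp (d * y) := by
      filter_upwards [hev] with y hy
      have h1 : |2 * y| = c * y := by rw [abs_of_pos (by linarith)]
      have h2 : -(ω * |y|) / ℏ = d * y := by rw [abs_of_pos hy, hd]; ring
      rw [groundState, h1, h2, one_mul]
    have hG : (fun y => |y| * groundState ℏ ω y) =ᶠ[nhds x]
        fun y => (1/2) * (c * y) ^ ((3/4) : ℝ) * Real.exp (d * y) := by
      filter_upwards [hev] with y hy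
      have hcy : (0:ℝ) < c * y := by simp [hc]; linarith
      have h1 : |2 * y| = c * y := by rw [abs_of_pos (by linarith)]
      have h2 : -(ω * |y|) / ℏ = d * y := by rw [abs_of_pos hy, hd]; ring
      have h3 : (c * y) ^ ((3/4) : ℝ) = (c * y) ^ (-(1/4) : ℝ) * (c * y) :=
        (rpow_facts _ hcy).2.2.1
      rw [groundState, h1, h2, h3, abs_of_pos hy, hc]
      ring
    have D1 : deriv (deriv (groundState ℏ ω)) x =
        deriv (deriv (fun y => 1 * (c * y) ^ (-(1/4) : ℝ) * Real.exp (d * y))) x :=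
      (hψ.deriv.deriv).self_of_nhds
    have D2 : deriv (deriv fun y => |y| * groundState ℏ ω y) x =
        deriv (deriv (fun y => (1/2) * (c * y) ^ ((3/4) : ℝ) * Real.exp (d * y))) x :=
      (hG.deriv.deriv).self_of_nhds
    obtain ⟨E1, E2, E3, E4, E5⟩ := rpow_facts (c * x) hcx
    rw [D1, D2, deriv2_P _ _ _ _ _ hcx', deriv2_P _ _ _ _ _ hcx', hψ.self_of_nhds,
      E1, E2, E3, E4, E5, abs_of_pos hpos]
    simp only [hc, hd]
    field_simp
    ring
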